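/- Let D = A_{3,−1,1} = {(x₁,x₂) ∈ ℝ² : x₂ > x₁³}. Then every harmonic map f = (u,v): ℂ → ℝ² whose image is contained in D is constant. (Equivalently, the tube domain T_D is Brody-hyperbolic: every holomorphic map ℂ → T_D is constant.) -/

import Mathlib

open Complex Metric Set Filter Topology

/-- The Laplacian of `u : ℂ → ℝ`, as the sum of the second directional derivatives
in the directions `1` and `I`. -/
noncomputable def laplacian (u : ℂ → ℝ) (z : ℂ) : ℝ :=
  fderiv ℝ (fun w => fderiv ℝ u w 1) z 1 +
    fderiv ℝ (fun w => fderiv ℝ u w Complex.I) z Complex.I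

/-- A real-valued function is harmonic on a set if it is `C²` there and its
Laplacian vanishes there. -/
def HarmonicOn (u : ℂ → ℝ) (s : Set ℂ) : Prop :=
  ContDiffOn ℝ 2 u s ∧ ∀ z ∈ s, laplacian u z = 0

/-- A map `f = (u, v) : ℂ → ℝ²` is a harmonic map on a set if both components
are harmonic there. -/
def HarmonicMapOn (f : ℂ → ℝ × ℝ) (s : Set ℂ) : Prop :=
  HarmonicOn (fun z => (f z).1) s ∧ HarmonicOn (fun z => (f z).2) s

namespace BrodyAux

noncomputable def pd (u : ℂ → ℝ) (d : ℂ) : ℂ → ℝ := fun w => fderiv ℝ u w d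

noncomputable def d2 (u : ℂ → ℝ) (d : ℂ) (z : ℂ) : ℝ := fderiv ℝ (pd u d) z d

lemma laplacian_eq (u : ℂ → ℝ) (z : ℂ) :
    laplacian u z = d2 u 1 z + d2 u I z := rfl

lemma exists_open_contDiffOn {ψ : ℂ → ℝ} {z : ℂ} (h : ContDiffAt ℝ 2 ψ z) :
    ∃ O : Set ℂ, IsOpen O ∧ z ∈ O ∧ ContDiffOn ℝ 2 ψ O := by
  obtain ⟨s, hs, hC⟩ := h.contDiffOn le_rfl (by simp)
  exact ⟨interior s, isOpen_interior, mem_interior_iff_mem_nhds.2 hs,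
    hC.mono interior_subset⟩

lemma eventually_diffAt {ψ : ℂ → ℝ} {z : ℂ} (h : ContDiffAt ℝ 2 ψ z) :
    ∀ᶠ w in 𝓝 z, DifferentiableAt ℝ ψ w := by
  obtain ⟨O, hO, hzO, hC⟩ := exists_open_contDiffOn h
  filter_upwards [hO.mem_nhds hzO] with w hw
  exact (hC.differentiableOn (by norm_num)).differentiableAt (hO.mem_nhds hw)

lemma pd_diffAt {ψ : ℂ → ℝ} {z : ℂ} (h : ContDiffAt ℝ 2 ψ z) (d : ℂ) :
    DifferentiableAt ℝ (pd ψ d) z := by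
  obtain ⟨O, hO, hzO, hC⟩ := exists_open_contDiffOn h
  have h1 : ContDiffOn ℝ 1 (fderiv ℝ ψ) O := hC.fderiv_of_isOpen hO (by norm_num)
  have h2 : DifferentiableAt ℝ (fderiv ℝ ψ) z :=
    (h1.differentiableOn (by norm_num)).differentiableAt (hO.mem_nhds hzO)
  exact h2.clm_apply (differentiableAt_const d)

lemma d2_add {f g : ℂ → ℝ} {z : ℂ} (hf : ContDiffAt ℝ 2 f z)
    (hg : ContDiffAt ℝ 2 g z) (d : ℂ) :
    d2 (fun w => f w + g w) d z = d2 f d z + d2 g d z := by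
  have hev : pd (fun w => f w + g w) d =ᶠ[𝓝 z] fun w => pd f d w + pd g d w := by
    filter_upwards [eventually_diffAt hf, eventually_diffAt hg] with w h1 h2
    simp [pd, fderiv_fun_add h1 h2]
  have h0 : d2 (fun w => f w + g w) d z
      = fderiv ℝ (fun w => pd f d w + pd g d w) z d := by
    unfold d2; rw [hev.fderiv_eq]
  rw [h0, fderiv_fun_add (pd_diffAt hf d) (pd_diffAt hg d)]
  simp [d2]

lemma d2_const_mul {f : ℂ → ℝ} {z : ℂ} (hf : ContDiffAt ℝ 2 f z) (α : ℝ) (d : ℂ) :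
    d2 (fun w => α * f w) d z = α * d2 f d z := by
  have hev : pd (fun w => α * f w) d =ᶠ[𝓝 z] fun w => α * pd f d w := by
    filter_upwards [eventually_diffAt hf] with w h1
    simp [pd, fderiv_const_mul h1]
  have h0 : d2 (fun w => α * f w) d z
      = fderiv ℝ (fun w => α * pd f d w) z d := by
    unfold d2; rw [hev.fderiv_eq]
  rw [h0, fderiv_const_mul (pd_diffAt hf d)]
  simp [d2]

lemma d2_add_const {f : ℂ → ℝ} (z : ℂ) (δ : ℝ) (d : ℂ) :
    d2 (fun w => f w + δ) d z = d2 f d z := by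
  have h : pd (fun w => f w + δ) d = pd f d := by
    funext w; simp [pd, fderiv_add_const]
  unfold d2; rw [h]

lemma laplacian_add_mul {f g : ℂ → ℝ} {z : ℂ} (α : ℝ)
    (hf : ContDiffAt ℝ 2 f z) (hg : ContDiffAt ℝ 2 g z) :
    laplacian (fun w => f w + α * g w) z = laplacian f z + α * laplacian g z := by
  have hg' : ContDiffAt ℝ 2 (fun w => α * g w) z := contDiffAt_const.mul hg
  rw [laplacian_eq, laplacian_eq f, laplacian_eq g,
      d2_add hf hg' 1, d2_add hf hg' I, d2_const_mul hg α 1, d2_const_mul hg α I]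
  ring

lemma laplacian_add_const {g : ℂ → ℝ} (z : ℂ) (δ : ℝ) :
    laplacian (fun w => g w + δ) z = laplacian g z := by
  rw [laplacian_eq, laplacian_eq g, d2_add_const, d2_add_const]

end BrodyAux
namespace BrodyAux

noncomputable def qc (c : ℂ) : ℂ → ℝ := fun z =>
  (z.re - c.re) * (z.re - c.re) + (z.im - c.im) * (z.im - c.im)

lemma qc_eq_dist (c z : ℂ) : qc c z = dist z c * dist z c := by
  rw [Complex.dist_eq, ← pow_two, ← Complex.normSq_eq_norm_sq, Complex.normSq_apply, Complex.sub_re,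
    Complex.sub_im]
  rfl

lemma qc_nonneg (c z : ℂ) : 0 ≤ qc c z := by
  rw [qc_eq_dist]; exact mul_nonneg dist_nonneg dist_nonneg

lemma qc_pos {c z : ℂ} (h : z ≠ c) : 0 < qc c z := by
  rw [qc_eq_dist]
  have := dist_pos.mpr h
  positivity

lemma contDiff_qc (c : ℂ) : ContDiff ℝ 2 (qc c) := by
  have hre : ContDiff ℝ 2 (fun z : ℂ => z.re - c.re) :=
    (Complex.reCLM.contDiff).sub contDiff_const
  have him : ContDiff ℝ 2 (fun z : ℂ => z.im - c.im) :=
    (Complex.imCLM.contDiff).sub contDiff_const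
  exact (hre.mul hre).add (him.mul him)

noncomputable def dqc (c z : ℂ) : ℂ →L[ℝ] ℝ :=
  ((z.re - c.re) • Complex.reCLM + (z.re - c.re) • Complex.reCLM) +
    ((z.im - c.im) • Complex.imCLM + (z.im - c.im) • Complex.imCLM)

lemma hasFDerivAt_re_sub (c : ℂ) (z : ℂ) :
    HasFDerivAt (fun z : ℂ => z.re - c.re) (Complex.reCLM : ℂ →L[ℝ] ℝ) z :=
  (Complex.reCLM.hasFDerivAt).sub_const _

lemma hasFDerivAt_im_sub (c : ℂ) (z : ℂ) :
    HasFDerivAt (fun z : ℂ => z.im - c.im) (Complex.imCLM : ℂ →L[ℝ] ℝ) z :=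
  (Complex.imCLM.hasFDerivAt).sub_const _

lemma hasFDerivAt_qc (c z : ℂ) : HasFDerivAt (qc c) (dqc c z) z :=
  ((hasFDerivAt_re_sub c z).mul (hasFDerivAt_re_sub c z)).add
    ((hasFDerivAt_im_sub c z).mul (hasFDerivAt_im_sub c z))

lemma dqc_apply_one (c z : ℂ) : dqc c z 1 = 2 * (z.re - c.re) := by
  simp [dqc]; ring

lemma dqc_apply_I (c z : ℂ) : dqc c z I = 2 * (z.im - c.im) := by
  simp [dqc]; ring

lemma laplacian_qc (c : ℂ) (z : ℂ) : laplacian (qc c) z = 4 := by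
  have hpd1 : pd (qc c) 1 = fun w => 2 * (w.re - c.re) := by
    funext w
    simp only [pd]
    rw [(hasFDerivAt_qc c w).fderiv, dqc_apply_one]
  have hpdI : pd (qc c) I = fun w => 2 * (w.im - c.im) := by
    funext w
    simp only [pd]
    rw [(hasFDerivAt_qc c w).fderiv, dqc_apply_I]
  have h1 : HasFDerivAt (fun w : ℂ => 2 * (w.re - c.re))
      ((2:ℝ) • (Complex.reCLM : ℂ →L[ℝ] ℝ)) z := (hasFDerivAt_re_sub c z).const_mul 2
  have hI : HasFDerivAt (fun w : ℂ => 2 * (w.im - c.im))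
      ((2:ℝ) • (Complex.imCLM : ℂ →L[ℝ] ℝ)) z := (hasFDerivAt_im_sub c z).const_mul 2
  rw [laplacian_eq]
  unfold d2
  rw [hpd1, hpdI, h1.fderiv, hI.fderiv]
  simp
  norm_num

lemma laplacian_const (m : ℝ) (z : ℂ) : laplacian (fun _ : ℂ => m) z = 0 := by
  have h : pd (fun _ : ℂ => m) 1 = fun _ => 0 := by
    funext w; simp [pd]
  have hI : pd (fun _ : ℂ => m) I = fun _ => 0 := by
    funext w; simp [pd]
  rw [laplacian_eq]
  unfold d2
  rw [h, hI]
  simp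

noncomputable def lsq (c : ℂ) : ℂ → ℝ := fun z => Real.log (qc c z)

lemma contDiffAt_lsq {c z : ℂ} (h : z ≠ c) : ContDiffAt ℝ 2 (lsq c) z := by
  have h1 : ContDiffAt ℝ 2 Real.log (qc c z) :=
    Real.contDiffAt_log.mpr (qc_pos h).ne'
  exact h1.comp z (contDiff_qc c).contDiffAt

lemma hasFDerivAt_lsq {c w : ℂ} (h : w ≠ c) :
    HasFDerivAt (lsq c) ((qc c w)⁻¹ • dqc c w) w := by
  have hlog : HasDerivAt Real.log (qc c w)⁻¹ (qc c w) :=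
    Real.hasDerivAt_log (qc_pos h).ne'
  exact hlog.comp_hasFDerivAt w (hasFDerivAt_qc c w)

lemma laplacian_lsq {c z : ℂ} (h : z ≠ c) : laplacian (lsq c) z = 0 := by
  have hop : {w : ℂ | w ≠ c} ∈ 𝓝 z := isOpen_ne.mem_nhds h
  -- first partials
  have hev1 : pd (lsq c) 1 =ᶠ[𝓝 z] fun w => (qc c w)⁻¹ * (2 * (w.re - c.re)) := by
    filter_upwards [hop] with w hw
    simp only [pd]
    rw [(hasFDerivAt_lsq hw).fderiv]
    simp [dqc_apply_one]
  have hevI : pd (lsq c) I =ᶠ[𝓝 z] fun w => (qc c w)⁻¹ * (2 * (w.im - c.im)) := by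
    filter_upwards [hop] with w hw
    simp only [pd]
    rw [(hasFDerivAt_lsq hw).fderiv]
    simp [dqc_apply_I]
  -- second partials
  have hqinv : HasFDerivAt (fun w => (qc c w)⁻¹)
      ((-((qc c z) ^ 2)⁻¹) • dqc c z) z :=
    (hasDerivAt_inv (qc_pos h).ne').comp_hasFDerivAt z (hasFDerivAt_qc c z)
  have h2re : HasFDerivAt (fun w : ℂ => 2 * (w.re - c.re))
      ((2:ℝ) • (Complex.reCLM : ℂ →L[ℝ] ℝ)) z := (hasFDerivAt_re_sub c z).const_mul 2
  have h2im : HasFDerivAt (fun w : ℂ => 2 * (w.im - c.im))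
      ((2:ℝ) • (Complex.imCLM : ℂ →L[ℝ] ℝ)) z := (hasFDerivAt_im_sub c z).const_mul 2
  have hmul1 := hqinv.fun_mul h2re
  have hmulI := hqinv.fun_mul h2im
  have e1 : d2 (lsq c) 1 z =
      (qc c z)⁻¹ * 2 + 2 * (z.re - c.re) * (-((qc c z) ^ 2)⁻¹ * (2 * (z.re - c.re))) := by
    unfold d2
    rw [hev1.fderiv_eq, hmul1.fderiv]
    simp [dqc_apply_one]
  have eI : d2 (lsq c) I z =
      (qc c z)⁻¹ * 2 + 2 * (z.im - c.im) * (-((qc c z) ^ 2)⁻¹ * (2 * (z.im - c.im))) := by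
    unfold d2
    rw [hevI.fderiv_eq, hmulI.fderiv]
    simp [dqc_apply_I]
  rw [laplacian_eq, e1, eI]
  have hq : qc c z = (z.re - c.re) * (z.re - c.re) + (z.im - c.im) * (z.im - c.im) := rfl
  have hqne : qc c z ≠ 0 := (qc_pos h).ne'
  field_simp
  nlinarith [hq]

end BrodyAux
namespace BrodyAux

lemma one_dim {g G : ℝ → ℝ} {L : ℝ}
    (hev : ∀ᶠ t in 𝓝 (0:ℝ), HasDerivAt g (G t) t)
    (hG : HasDerivAt G L 0) (hmin : IsLocalMin g 0) : 0 ≤ L := by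
  by_contra hL
  push_neg at hL
  have hG0 : G 0 = 0 := hmin.hasDerivAt_eq_zero hev.self_of_nhds
  have hslope : Tendsto (slope G 0) (𝓝[≠] (0:ℝ)) (𝓝 L) :=
    hasDerivAt_iff_tendsto_slope.mp hG
  have hneg' : ∀ᶠ t in 𝓝[≠] (0:ℝ), slope G 0 t < 0 :=
    hslope.eventually_lt_const hL
  have hneg : ∀ᶠ t in 𝓝 (0:ℝ), t ∈ Ioi (0:ℝ) → G t < 0 := by
    have h2 : ∀ᶠ t in 𝓝 (0:ℝ), t ∈ ({(0:ℝ)}ᶜ : Set ℝ) → slope G 0 t < 0 :=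
      eventually_nhdsWithin_iff.mp hneg'
    filter_upwards [h2] with t ht htpos
    have hslt : slope G 0 t < 0 := ht (by simp; exact ne_of_gt htpos)
    have : slope G 0 t = G t / t := by
      simp [slope_def_field, hG0]
    rw [this] at hslt
    rcases div_neg_iff.mp hslt with ⟨h1, h2'⟩ | ⟨h1, h2'⟩
    · linarith [mem_Ioi.mp htpos]
    · exact h1
  obtain ⟨d1, hd1, H1⟩ := Metric.eventually_nhds_iff.mp hev
  obtain ⟨d2', hd2, H2⟩ := Metric.eventually_nhds_iff.mp hmin
  obtain ⟨d3, hd3, H3⟩ := Metric.eventually_nhds_iff.mp hneg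
  set t0 : ℝ := min d1 (min d2' d3) / 2 with ht0
  have ht0pos : 0 < t0 := by positivity
  have ht0lt : t0 < d1 ∧ t0 < d2' ∧ t0 < d3 := by
    refine ⟨?_, ?_, ?_⟩ <;>
    · rw [ht0]
      have h1 := min_le_left d1 (min d2' d3)
      have h2 := (min_le_right d1 (min d2' d3)).trans (min_le_left d2' d3)
      have h3 := (min_le_right d1 (min d2' d3)).trans (min_le_right d2' d3)
      linarith [lt_min hd1 (lt_min hd2 hd3)]
  have hderiv : ∀ x ∈ Ioo (0:ℝ) t0, HasDerivAt g (G x) x := by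
    intro x hx
    apply H1
    rw [Real.dist_eq, sub_zero, abs_of_pos hx.1]
    linarith [hx.2, ht0lt.1]
  have hcont : ContinuousOn g (Icc (0:ℝ) t0) := by
    intro x hx
    have : HasDerivAt g (G x) x := by
      apply H1
      rw [Real.dist_eq, sub_zero, _root_.abs_of_nonneg hx.1]
      linarith [hx.2, ht0lt.1]
    exact this.continuousAt.continuousWithinAt
  obtain ⟨ξ, hξ, hξeq⟩ := exists_hasDerivAt_eq_slope g G ht0pos hcont hderiv
  have hg0le : g 0 ≤ g t0 := by
    apply H2
    rw [Real.dist_eq, sub_zero, abs_of_pos ht0pos]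
    exact ht0lt.2.1
  have hGξpos : 0 ≤ G ξ := by
    rw [hξeq]
    apply div_nonneg (by linarith) (by linarith [ht0pos])
  have hGξneg : G ξ < 0 := by
    apply H3
    · rw [Real.dist_eq, sub_zero, abs_of_pos hξ.1]
      linarith [hξ.2, ht0lt.2.2]
    · exact hξ.1
  linarith

lemma isLocalMin_d2_nonneg {ψ : ℂ → ℝ} {ζ : ℂ} (hψ : ContDiffAt ℝ 2 ψ ζ)
    (hmin : IsLocalMin ψ ζ) (d : ℂ) : 0 ≤ d2 ψ d ζ := by
  obtain ⟨O, hO, hζO, hC⟩ := exists_open_contDiffOn hψ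
  set T : ℝ → ℂ := fun t => ζ + t • d with hT
  have hTc : Continuous T := by
    apply continuous_const.add
    exact (continuous_id.smul continuous_const)
  have hT0 : T 0 = ζ := by simp [hT]
  have hTt : ∀ t : ℝ, HasDerivAt T d t := by
    intro t
    have h1 : HasDerivAt (fun t : ℝ => t • d) ((1:ℝ) • d) t :=
      (hasDerivAt_id t).smul_const d
    simpa [hT] using h1.const_add ζ
  set g : ℝ → ℝ := fun t => ψ (T t) with hg
  set G : ℝ → ℝ := fun t => fderiv ℝ ψ (T t) d with hGdef
  have hnear : ∀ᶠ t in 𝓝 (0:ℝ), T t ∈ O := by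
    have h1 : Tendsto T (𝓝 0) (𝓝 ζ) := by
      rw [← hT0]; exact hTc.tendsto 0
    exact h1 (hO.mem_nhds hζO)
  have hev : ∀ᶠ t in 𝓝 (0:ℝ), HasDerivAt g (G t) t := by
    filter_upwards [hnear] with t ht
    have hdiff : DifferentiableAt ℝ ψ (T t) :=
      (hC.differentiableOn (by norm_num)).differentiableAt (hO.mem_nhds ht)
    exact hdiff.hasFDerivAt.comp_hasDerivAt t (hTt t)
  have hGd : HasDerivAt G (d2 ψ d ζ) 0 := by
    have h1 : DifferentiableAt ℝ (pd ψ d) ζ := pd_diffAt hψ d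
    have h2 : HasFDerivAt (pd ψ d) (fderiv ℝ (pd ψ d) ζ) (T 0) := by
      rw [hT0]; exact h1.hasFDerivAt
    have h3 := h2.comp_hasDerivAt 0 (hTt 0)
    exact h3
  have hgmin : IsLocalMin g 0 := by
    have h1 : Tendsto T (𝓝 0) (𝓝 ζ) := by
      rw [← hT0]; exact hTc.tendsto 0
    have h2 := h1.eventually hmin
    filter_upwards [h2] with t ht
    simpa [hg, hT0] using ht
  exact one_dim hev hGd hgmin

lemma minprin {U V : Set ℂ} (hUo : IsOpen U) (hUb : Bornology.IsBounded U)
    (hVo : IsOpen V) (hUV : closure U ⊆ V) {φ : ℂ → ℝ}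
    (hφ : ∀ z ∈ V, ContDiffAt ℝ 2 φ z)
    (hlap : ∀ z ∈ U, laplacian φ z = 0)
    (hfr : ∀ z ∈ frontier U, 0 ≤ φ z) :
    ∀ z ∈ U, 0 ≤ φ z := by
  intro z hz
  by_contra hneg
  push_neg at hneg
  obtain ⟨R, hR⟩ := hUb.subset_closedBall 0
  have hclR : closure U ⊆ closedBall 0 R :=
    closure_minimal hR Metric.isClosed_closedBall
  have hR0 : 0 ≤ R := by
    have := hclR (subset_closure hz)
    have := mem_closedBall.mp this
    linarith [dist_nonneg (x := z) (y := 0)]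
  set ε : ℝ := (-φ z) / (R * R + 1) with hε
  have hεpos : 0 < ε := by
    apply div_pos (by linarith) (by nlinarith)
  set ψ : ℂ → ℝ := fun w => φ w + (-ε) * qc 0 w with hψdef
  have hqbound : ∀ w ∈ closure U, qc 0 w ≤ R * R := by
    intro w hw
    rw [qc_eq_dist]
    have h1 : dist w 0 ≤ R := mem_closedBall.mp (hclR hw)
    exact mul_le_mul h1 h1 dist_nonneg hR0
  have hcomp : IsCompact (closure U) :=
    Metric.isCompact_of_isClosed_isBounded isClosed_closure hUb.closure
  have hcont : ContinuousOn ψ (closure U) := by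
    apply ContinuousOn.add
    · intro w hw
      exact ((hφ w (hUV hw)).continuousAt).continuousWithinAt
    · exact (continuous_const.mul (contDiff_qc 0).continuous).continuousOn
  obtain ⟨ζ, hζcl, hζmin⟩ := hcomp.exists_isMinOn ⟨z, subset_closure hz⟩ hcont
  by_cases hζU : ζ ∈ U
  · -- interior minimum: contradiction with laplacian
    have hloc : IsLocalMin ψ ζ := by
      have hmem : closure U ∈ 𝓝 ζ :=
        mem_nhds_iff.2 ⟨U, subset_closure, hUo, hζU⟩
      exact hζmin.isLocalMin hmem
    have hψC2 : ContDiffAt ℝ 2 ψ ζ := by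
      apply ContDiffAt.add
      · exact hφ ζ (hUV (subset_closure hζU))
      · exact contDiffAt_const.mul (contDiff_qc 0).contDiffAt
    have hlapψ : laplacian ψ ζ = laplacian φ ζ + (-ε) * 4 := by
      rw [hψdef]
      rw [laplacian_add_mul (-ε) (hφ ζ (hUV (subset_closure hζU)))
          (contDiff_qc 0).contDiffAt]
      rw [laplacian_qc]
    have h1 : 0 ≤ d2 ψ 1 ζ := isLocalMin_d2_nonneg hψC2 hloc 1
    have h2 : 0 ≤ d2 ψ I ζ := isLocalMin_d2_nonneg hψC2 hloc I
    have h3 : 0 ≤ laplacian ψ ζ := by rw [laplacian_eq]; linarith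
    rw [hlapψ, hlap ζ hζU] at h3
    linarith
  · -- boundary minimum
    have hζfr : ζ ∈ frontier U := by
      rw [frontier, hUo.interior_eq]
      exact ⟨hζcl, hζU⟩
    have hφζ : 0 ≤ φ ζ := hfr ζ hζfr
    have hψζ : -(ε * (R * R)) ≤ ψ ζ := by
      have h1 : qc 0 ζ ≤ R * R := hqbound ζ hζcl
      have h2 : 0 ≤ qc 0 ζ := qc_nonneg 0 ζ
      simp only [hψdef]
      nlinarith
    have hψz : ψ ζ ≤ ψ z := hζmin (subset_closure hz)
    have hlast : φ z ≥ -(ε * (R * R)) := by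
      have h2 : 0 ≤ qc 0 z := qc_nonneg 0 z
      have : ψ z ≤ φ z := by simp only [hψdef]; nlinarith
      linarith
    rw [hε] at hlast
    have hRR : 0 < R * R + 1 := by nlinarith
    rw [ge_iff_le, neg_le, ← sub_nonneg] at hlast
    have : (-φ z) / (R * R + 1) * (R * R) - -φ z
        = (-φ z) * ((R * R) / (R * R + 1) - 1) := by
      field_simp
      ring
    rw [this] at hlast
    have hratio : (R * R) / (R * R + 1) - 1 < 0 := by
      rw [sub_neg]
      rw [div_lt_one hRR]
      linarith
    nlinarith

end BrodyAux
namespace BrodyAux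

lemma young_ineq {lam w : ℝ} (hl : 0 ≤ lam) (hw : 0 ≤ w) :
    lam * w ≤ lam * Real.sqrt (2 * lam) + w ^ 3 / 2 := by
  rcases le_or_gt w (Real.sqrt (2 * lam)) with h | h
  · have h1 : lam * w ≤ lam * Real.sqrt (2 * lam) :=
      mul_le_mul_of_nonneg_left h hl
    nlinarith [pow_nonneg hw 3]
  · have hs : Real.sqrt (2 * lam) ^ 2 = 2 * lam := Real.sq_sqrt (by linarith)
    have hsnn : 0 ≤ Real.sqrt (2 * lam) := Real.sqrt_nonneg _
    have hw2 : 2 * lam < w ^ 2 := by nlinarith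
    nlinarith [mul_nonneg hw hw, mul_nonneg (Real.sqrt_nonneg (2*lam)) hl]

lemma cube_ineq (w a : ℝ) (hw : 0 ≤ w) :
    w ^ 3 / 2 - 109 * |a| ^ 3 ≤ (w + a) ^ 3 := by
  set b := |a| with hb
  have hab : -b ≤ a := neg_abs_le a
  have hab2 : a ≤ b := le_abs_self a
  have hb0 : 0 ≤ b := abs_nonneg a
  rcases le_or_gt (6 * b) w with h | h
  · -- w ≥ 6b
    have h3 : 0 ≤ w * w * (w - 6 * b) := by
      apply mul_nonneg (mul_nonneg hw hw); linarith
    have h4 : -(b ^ 3) ≤ a ^ 3 := by nlinarith [sq_nonneg (a + b), sq_nonneg (a - b)]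
    nlinarith [mul_nonneg (mul_nonneg hw hw) hb0, mul_nonneg hw (mul_nonneg hb0 hb0),
      sq_nonneg (w + a), mul_nonneg (mul_nonneg hw hw) (sq_nonneg a)]
  · -- w < 6b
    have h1 : -b ≤ w + a := by linarith
    have h2 : (-b) ^ 3 ≤ (w + a) ^ 3 := by
      nlinarith [sq_nonneg (w + a + b), sq_nonneg (w + a - b), h1]
    have h3 : w ^ 3 ≤ 216 * b ^ 3 := by
      have h4 : w ^ 3 ≤ (6 * b) ^ 3 := pow_le_pow_left₀ hw h.le 3
      nlinarith
    nlinarith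

set_option maxHeartbeats 1000000 in
lemma core {u v : ℂ → ℝ} (hu2 : ContDiff ℝ 2 u) (hv2 : ContDiff ℝ 2 v)
    (hlu : ∀ z, laplacian u z = 0) (hlv : ∀ z, laplacian v z = 0)
    (huv : ∀ z, u z ^ 3 < v z) {a : ℝ} {c p : ℂ} {ρ : ℝ} (hρ : 0 < ρ)
    (hball : closedBall c ρ ⊆ {w : ℂ | u w < a}) (hp : a < u p) : False := by
  set b := |a| with hb
  have hb0 : 0 ≤ b := abs_nonneg a
  have hba : -(b^3) ≤ a^3 := by
    have : -b ≤ a := neg_abs_le a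
    have h2 : a ≤ b := le_abs_self a
    nlinarith [sq_nonneg (a+b), sq_nonneg (a-b)]
  -- p is away from the disk
  have hpc : ρ < dist p c := by
    by_contra hcon
    push_neg at hcon
    have : u p < a := hball (mem_closedBall.mpr hcon)
    linarith
  have hdistpc : 0 < dist p c := lt_trans hρ hpc
  set Lρ : ℝ := Real.log (ρ * ρ) with hLρ
  set Np : ℝ := Real.log (qc c p) - Lρ with hNp
  have hNp0 : 0 ≤ Np := by
    rw [hNp, hLρ, sub_nonneg]
    apply Real.log_le_log (by positivity)
    rw [qc_eq_dist]
    exact mul_le_mul hpc.le hpc.le hρ.le dist_nonneg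
  -- main inequality for each lam ≥ 1
  have key : ∀ lam : ℝ, 1 ≤ lam → lam * (u p - a) ≤ v p + b ^ 3 := by
    intro lam hlam
    have hlam0 : (0:ℝ) ≤ lam := by linarith
    set β : ℝ := lam * Real.sqrt (2 * lam) + 109 * b ^ 3 with hβ
    have hβ0 : 0 ≤ β := by
      rw [hβ]
      have := Real.sqrt_nonneg (2 * lam)
      positivity
    -- the K-dependent estimate
    have hK : ∀ K : ℝ, dist p c < K → ρ < K →
        lam * (u p - a) ≤ v p + b ^ 3
          + β * Np / (Real.log (K * K) - Lρ) := by
      intro K hK1 hK2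
      have hKpos : 0 < K := lt_trans hρ hK2
      set DK : ℝ := Real.log (K * K) - Lρ with hDK
      have hDKpos : 0 < DK := by
        rw [hDK, hLρ, sub_pos]
        apply Real.log_lt_log (by positivity)
        apply mul_lt_mul' hK2.le hK2 hρ.le hKpos
      set γ : ℝ := β / DK with hγ
      have hγ0 : 0 ≤ γ := div_nonneg hβ0 hDKpos.le
      set δ : ℝ := lam * a - γ * Lρ + b ^ 3 with hδ
      set φ : ℂ → ℝ := fun w => (v w + (-lam) * u w + γ * lsq c w) + δ with hφ
      set U : Set ℂ := {w : ℂ | a < u w} ∩ ball c K with hU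
      set V : Set ℂ := {(c : ℂ)}ᶜ with hV
      have hUo : IsOpen U := (isOpen_lt continuous_const hu2.continuous).inter isOpen_ball
      have hUb : Bornology.IsBounded U :=
        (Metric.isBounded_ball).subset inter_subset_right
      have hVo : IsOpen V := isOpen_compl_singleton
      have huc : u c < a := hball (mem_closedBall_self hρ.le)
      have hclU : closure U ⊆ {w : ℂ | a ≤ u w} ∩ closedBall c K := by
        apply closure_minimal
        · intro w hw
          exact ⟨le_of_lt (show a < u w from hw.1), ball_subset_closedBall hw.2⟩
        · exact (isClosed_le continuous_const hu2.continuous).inter Metric.isClosed_closedBall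
      have hUV : closure U ⊆ V := by
        intro w hw
        have h1 := (hclU hw).1
        intro hwc
        rw [mem_singleton_iff] at hwc
        rw [hwc] at h1
        exact absurd h1 (not_le.mpr huc)
      have hφC2 : ∀ w ∈ V, ContDiffAt ℝ 2 φ w := by
        intro w hw
        have hw' : w ≠ c := hw
        apply ContDiffAt.add _ contDiffAt_const
        apply ContDiffAt.add
        apply ContDiffAt.add hv2.contDiffAt
        · exact contDiffAt_const.mul hu2.contDiffAt
        · exact contDiffAt_const.mul (contDiffAt_lsq hw')
      have hφlap : ∀ w ∈ U, laplacian φ w = 0 := by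
        intro w hw
        have hw' : w ≠ c := fun hcc => absurd (hcc ▸ hw.1) (by simp [huc]; linarith)
        have l1 : laplacian (fun x => v x + (-lam) * u x) w = 0 := by
          rw [laplacian_add_mul (-lam) hv2.contDiffAt hu2.contDiffAt, hlv, hlu]; ring
        have l2 : laplacian (fun x => (v x + (-lam) * u x) + γ * lsq c x) w = 0 := by
          rw [laplacian_add_mul γ (hv2.contDiffAt.add (contDiffAt_const.mul hu2.contDiffAt))
              (contDiffAt_lsq hw'), l1, laplacian_lsq hw']
          ring
        calc laplacian φ w
            = laplacian (fun x => (v x + (-lam) * u x) + γ * lsq c x) w := by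
              rw [hφ, laplacian_add_const]
          _ = 0 := l2
      have hfront : ∀ w ∈ frontier U, 0 ≤ φ w := by
        intro w hw
        have hwcl : w ∈ closure U := hw.1
        have h1 : a ≤ u w := (hclU hwcl).1
        have h2 := (hclU hwcl).2
        have hwnotU : w ∉ U := by
          rw [frontier, hUo.interior_eq] at hw
          exact hw.2
        have hvw := huv w
        rcases eq_or_lt_of_le h1 with hcase | hcase
        · -- u w = a
          have hwρ : ρ < dist w c := by
            by_contra hcon
            push_neg at hcon
            have : u w < a := hball (mem_closedBall.mpr hcon)
            rw [← hcase] at this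
            exact lt_irrefl _ this
          have hlsq : Lρ ≤ lsq c w := by
            rw [hLρ]
            apply Real.log_le_log (by positivity)
            rw [qc_eq_dist]
            exact mul_le_mul hwρ.le hwρ.le hρ.le dist_nonneg
          have hγterm : 0 ≤ γ * (lsq c w - Lρ) := mul_nonneg hγ0 (by linarith)
          have hphiw : φ w = v w + γ * (lsq c w - Lρ) + b^3 := by
            simp only [hφ, hδ]
            rw [← hcase]
            ring
          rw [hphiw]
          have : a ^ 3 < v w := by rw [hcase]; exact hvw
          nlinarith
        · -- a < u w, so dist w c = K
          have hwK : dist w c = K := by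
            have h3 : ¬(dist w c < K) := by
              intro hlt
              exact hwnotU ⟨hcase, mem_ball.mpr hlt⟩
            have h4 : dist w c ≤ K := mem_closedBall.mp h2
            linarith [lt_or_eq_of_le h4]
          have hlsqK : lsq c w = Real.log (K * K) := by
            unfold lsq
            rw [qc_eq_dist, hwK]
          have hwa0 : (0:ℝ) ≤ u w - a := by linarith
          have hy := young_ineq hlam0 hwa0
          have hc := cube_ineq (u w - a) a hwa0
          rw [← hb] at hc
          have hγDK : γ * DK = β := by
            rw [hγ]; field_simp
          have hφw : φ w = v w - lam * (u w - a) + γ * (Real.log (K*K) - Lρ) + b ^ 3 := by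
            simp only [hφ, hδ, hlsqK]
            ring
          have hγK : γ * (Real.log (K*K) - Lρ) = β := hγDK
          rw [hγK] at hφw
          rw [hφw]
          have hvw3 : ((u w - a) + a) ^ 3 < v w := by
            have heq : (u w - a) + a = u w := by ring
            rw [heq]; exact hvw
          nlinarith [pow_nonneg hb0 3, Real.sqrt_nonneg (2*lam), hβ]
      have hpU : p ∈ U := ⟨hp, mem_ball.mpr hK1⟩
      have := minprin hUo hUb hVo hUV hφC2 hφlap hfront p hpU
      -- unfold the value at p
      have hφp : φ p = v p - lam * (u p - a) + γ * Np + b ^ 3 := by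
        simp only [hφ, hδ, hNp, lsq]
        ring
      rw [hφp] at this
      have hγNp : γ * Np = β * Np / DK := by rw [hγ]; ring
      rw [hγNp] at this
      linarith
    -- limit K → ∞
    have htend : Tendsto (fun K : ℝ => β * Np / (Real.log (K * K) - Lρ))
        atTop (𝓝 0) := by
      have h1 : Tendsto (fun K : ℝ => K * K) atTop atTop :=
        tendsto_id.atTop_mul_atTop₀ tendsto_id
      have h2 : Tendsto (fun K : ℝ => Real.log (K * K)) atTop atTop :=
        Real.tendsto_log_atTop.comp h1
      have h3 : Tendsto (fun K : ℝ => Real.log (K * K) - Lρ) atTop atTop :=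
        tendsto_atTop_add_const_right _ (-Lρ) h2
      have h4 : Tendsto (fun K : ℝ => (Real.log (K * K) - Lρ)⁻¹) atTop (𝓝 0) :=
        h3.inv_tendsto_atTop
      have h5 := h4.const_mul (β * Np)
      simpa [div_eq_mul_inv, mul_comm] using h5
    have hev : ∀ᶠ K : ℝ in atTop,
        lam * (u p - a) - v p - b ^ 3 ≤ β * Np / (Real.log (K * K) - Lρ) := by
      filter_upwards [eventually_gt_atTop (dist p c), eventually_gt_atTop ρ] with K h1 h2
      linarith [hK K h1 h2]
    have := ge_of_tendsto htend hev
    linarith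
  -- now contradiction in lam
  set σ : ℝ := u p - a with hσ
  have hσ0 : 0 < σ := by rw [hσ]; linarith
  set lam : ℝ := max 1 ((v p + b ^ 3 + 1) / σ) with hlam
  have h1 : 1 ≤ lam := le_max_left _ _
  have h2 : (v p + b ^ 3 + 1) / σ ≤ lam := le_max_right _ _
  have h3 : v p + b ^ 3 + 1 ≤ lam * σ := by
    rw [div_le_iff₀ hσ0] at h2
    linarith
  have h4 := key lam h1
  linarith

end BrodyAux
namespace BrodyAux

lemma const_of_cubedom {u v : ℂ → ℝ} (hu2 : ContDiff ℝ 2 u) (hv2 : ContDiff ℝ 2 v)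
    (hlu : ∀ z, laplacian u z = 0) (hlv : ∀ z, laplacian v z = 0)
    (huv : ∀ z, u z ^ 3 < v z) : ∀ z w, u z = u w := by
  have main : ∀ zlo zhi : ℂ, u zlo < u zhi → False := by
    intro zlo zhi hlt
    set a : ℝ := (u zlo + u zhi) / 2 with ha
    have hopen : IsOpen {w : ℂ | u w < a} := isOpen_lt hu2.continuous continuous_const
    have hzlo : zlo ∈ {w : ℂ | u w < a} := by
      simp only [mem_setOf_eq, ha]; linarith
    obtain ⟨r, hr, hrsub⟩ := Metric.isOpen_iff.mp hopen zlo hzlo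
    have hrsub2 : closedBall zlo (r / 2) ⊆ {w : ℂ | u w < a} :=
      (Metric.closedBall_subset_ball (by linarith)).trans hrsub
    exact core hu2 hv2 hlu hlv huv (by linarith : (0:ℝ) < r / 2) hrsub2
      (by simp only [ha]; linarith : a < u zhi)
  intro z w
  by_contra hne
  rcases Ne.lt_or_gt hne with h | h
  · exact main z w h
  · exact main w z h

end BrodyAux


/-- Every harmonic map `f = (u, v) : ℂ → ℝ²` with image in
`A_{3,-1,1} = {(x₁, x₂) : x₂ > x₁³}` is constant (Brody hyperbolicity of the tube
domain over this base). -/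
theorem brody_A3 (f : ℂ → ℝ × ℝ)
    (hharm : HarmonicMapOn f (Set.univ : Set ℂ))
    (himage : ∀ z : ℂ, (f z).1 ^ 3 < (f z).2) :
    ∀ z w : ℂ, f z = f w := by
  obtain ⟨⟨hu2, hlu⟩, hv2, hlv⟩ := hharm
  set u : ℂ → ℝ := fun z => (f z).1 with hu
  set v : ℂ → ℝ := fun z => (f z).2 with hv
  have hu2' : ContDiff ℝ 2 u := contDiffOn_univ.mp hu2
  have hv2' : ContDiff ℝ 2 v := contDiffOn_univ.mp hv2
  have hlu' : ∀ z, laplacian u z = 0 := fun z => hlu z (Set.mem_univ z)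
  have hlv' : ∀ z, laplacian v z = 0 := fun z => hlv z (Set.mem_univ z)
  have huv : ∀ z, u z ^ 3 < v z := himage
  have hconstu : ∀ z w, u z = u w :=
    BrodyAux.const_of_cubedom hu2' hv2' hlu' hlv' huv
  set m : ℝ := u 0 ^ 3 with hm
  have hum : ∀ z, u z ^ 3 = m := by
    intro z; rw [hm, hconstu z 0]
  have hvm : ∀ z, m < v z := by
    intro z; rw [← hum z]; exact huv z
  -- second pair
  set U2 : ℂ → ℝ := fun z => m - v z with hU2
  set V2 : ℂ → ℝ := fun z => v z - m with hV2
  have hU2c : ContDiff ℝ 2 U2 := contDiff_const.sub hv2'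
  have hV2c : ContDiff ℝ 2 V2 := hv2'.sub contDiff_const
  have hlapU2 : ∀ z, laplacian U2 z = 0 := by
    intro z
    have h1 : U2 = fun w => (fun _ : ℂ => m) w + (-1 : ℝ) * v w := by
      funext w; simp [hU2]; ring
    rw [h1, BrodyAux.laplacian_add_mul (-1 : ℝ) contDiffAt_const hv2'.contDiffAt,
      BrodyAux.laplacian_const, hlv']
    ring
  have hlapV2 : ∀ z, laplacian V2 z = 0 := by
    intro z
    have h1 : V2 = fun w => v w + (-1 : ℝ) * (fun _ : ℂ => m) w := by
      funext w; simp [hV2]; ring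
    rw [h1, BrodyAux.laplacian_add_mul (-1 : ℝ) hv2'.contDiffAt contDiffAt_const,
      BrodyAux.laplacian_const, hlv']
    ring
  have hUV2 : ∀ z, U2 z ^ 3 < V2 z := by
    intro z
    have ht : 0 < v z - m := by linarith [hvm z]
    simp only [hU2, hV2]
    nlinarith [pow_pos ht 3]
  have hconstv : ∀ z w, v z = v w := by
    intro z w
    have := BrodyAux.const_of_cubedom hU2c hV2c hlapU2 hlapV2 hUV2 z w
    simp only [hU2] at this
    linarith
  intro z w
  have h1 : (f z).1 = (f w).1 := hconstu z w
  have h2 : (f z).2 = (f w).2 := hconstv z w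
  exact Prod.ext h1 h2
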